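/- Let X ∈ ℝ^{N×T} with T ≥ 1, let C := (1/T) X Xᵀ, and let C^{1/2} denote the positive semidefinite square root of the positive semidefinite matrix C. Then for every Y ∈ ℝ^{N×T} satisfying Y Yᵀ = T · I_N, one has Tr(X Yᵀ) ≤ T · Tr(C^{1/2}). -/

import Mathlib

open Matrix BigOperators

noncomputable section

open scoped ComplexOrder in
/-- The positive semidefinite square root of a positive semidefinite matrix
(the definition `Matrix.PosSemidef.sqrt` of the older Mathlib, since removed). -/
def Matrix.PosSemidef.sqrt {n 𝕜 : Type*} [Fintype n] [DecidableEq n] [RCLike 𝕜]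
    {A : Matrix n n 𝕜} (hA : A.PosSemidef) : Matrix n n 𝕜 :=
  hA.1.eigenvectorUnitary.1 * diagonal ((↑) ∘ (Real.sqrt ·) ∘ hA.1.eigenvalues) *
  (star hA.1.eigenvectorUnitary : Matrix n n 𝕜)

variable {n : Type*} [Fintype n] [DecidableEq n]

lemma psd_sqrt_mul_self' {A : Matrix n n ℝ} (hA : A.PosSemidef) : hA.sqrt * hA.sqrt = A := by
  conv_rhs => rw [hA.1.spectral_theorem, Unitary.conjStarAlgAut_apply]
  unfold Matrix.PosSemidef.sqrt
  have hU : (star hA.1.eigenvectorUnitary : Matrix n n ℝ) * hA.1.eigenvectorUnitary.1 = 1 :=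
    Unitary.coe_star_mul_self _
  rw [show ∀ U D Us : Matrix n n ℝ, U * D * Us * (U * D * Us) = U * D * (Us * U) * D * Us by
    intro U D Us; simp only [Matrix.mul_assoc], hU, Matrix.mul_one,
    Matrix.mul_assoc _ (diagonal _) (diagonal _), diagonal_mul_diagonal]
  congr 2
  ext i j
  by_cases h : i = j <;> simp [diagonal_apply, h, Real.mul_self_sqrt (hA.eigenvalues_nonneg j)]

lemma psd_posSemidef_sqrt' {A : Matrix n n ℝ} (hA : A.PosSemidef) : hA.sqrt.PosSemidef := by
  unfold Matrix.PosSemidef.sqrt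
  have := (PosSemidef.diagonal (R := ℝ) (n := n)
    (d := (↑) ∘ (Real.sqrt ·) ∘ hA.1.eigenvalues) (fun i => by simp [Real.sqrt_nonneg])).mul_mul_conjTranspose_same
    (hA.1.eigenvectorUnitary : Matrix n n ℝ)
  rw [star_eq_conjTranspose]
  exact this

lemma psd_trace_nonneg' {A : Matrix n n ℝ} (hA : A.PosSemidef) : 0 ≤ A.trace := by
  rw [Matrix.trace]
  refine Finset.sum_nonneg fun i _ => ?_
  have := hA.dotProduct_mulVec_nonneg (Pi.single i 1)
  simpa [Matrix.mulVec_single, dotProduct, Pi.single_apply] using this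

omit [DecidableEq n] in
lemma psd_smul' {c : ℝ} (hc : 0 ≤ c) {A : Matrix n n ℝ} (hA : A.PosSemidef) :
    (c • A).PosSemidef := by
  constructor
  · unfold Matrix.IsHermitian
    rw [conjTranspose_smul, hA.1]
    simp
  · exact (hA.smul hc).2

lemma psd_trace_mul_nonneg' {A B : Matrix n n ℝ} (hA : A.PosSemidef) (hB : B.PosSemidef) :
    0 ≤ (A * B).trace := by
  have h : A * B = hA.sqrt * (hA.sqrt * B) := by
    rw [← Matrix.mul_assoc, psd_sqrt_mul_self' hA]
  rw [h, Matrix.trace_mul_comm]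
  have h2 : ((hA.sqrt * B) * hA.sqrt) = hA.sqrt ᴴ * B * hA.sqrt := by
    rw [(psd_posSemidef_sqrt' hA).1, Matrix.mul_assoc]
  rw [h2]
  exact psd_trace_nonneg' (hB.conjTranspose_mul_mul_same _)

lemma posdef_smul_one' {c : ℝ} (hc : 0 < c) : (c • (1 : Matrix n n ℝ)).PosDef := by
  constructor
  · unfold Matrix.IsHermitian
    rw [conjTranspose_smul, conjTranspose_one]
    simp
  · exact ((PosDef.one (n := n) (R := ℝ)).smul hc).2

/-- Trace-maximization bound (Appendix B, via Von Neumann's trace inequality): for any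
`Y` with `Y Yᵀ = T I_N`, the correlation `Tr(X Yᵀ)` is at most `T · Tr(C^{1/2})`, where
`C = (1/T) X Xᵀ` and `C^{1/2}` is its positive semidefinite square root. -/
theorem trace_correlation_le_trace_sqrt_cov
    (N T : ℕ) (hT : 1 ≤ T)
    (X : Matrix (Fin N) (Fin T) ℝ)
    (hC : Matrix.PosSemidef ((T : ℝ)⁻¹ • (X * Xᵀ)))
    (Y : Matrix (Fin N) (Fin T) ℝ)
    (hY : Y * Yᵀ = (T : ℝ) • (1 : Matrix (Fin N) (Fin N) ℝ)) :
    (X * Yᵀ).trace ≤ (T : ℝ) * hC.sqrt.trace := by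
  have hTpos : (0 : ℝ) < T := by exact_mod_cast hT
  set S := hC.sqrt with hSdef
  have hS : S.PosSemidef := psd_posSemidef_sqrt' hC
  have hXX : X * Xᵀ = (T : ℝ) • (S * S) := by
    rw [psd_sqrt_mul_self' hC, smul_smul, mul_inv_cancel₀ hTpos.ne', one_smul]
  refine le_of_forall_pos_le_add fun δ hδ => ?_
  have h1 : (0 : ℝ) < (T : ℝ) * N + 1 := by positivity
  set ε : ℝ := δ / ((T : ℝ) * N + 1) with hε
  have hεpos : 0 < ε := div_pos hδ h1
  set P := S + ε • (1 : Matrix (Fin N) (Fin N) ℝ) with hPdef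
  have hPD : P.PosDef := Matrix.PosDef.posSemidef_add hS (posdef_smul_one' hεpos)
  have hdet : IsUnit P.det := isUnit_iff_ne_zero.mpr hPD.det_pos.ne'
  have hinv1 : P⁻¹ * P = 1 := Matrix.nonsing_inv_mul P hdet
  have hinv2 : P * P⁻¹ = 1 := Matrix.mul_nonsing_inv P hdet
  have hQ : P⁻¹.PosSemidef := hPD.inv.posSemidef
  have hPt : Pᵀ = P := by
    rw [← Matrix.conjTranspose_eq_transpose_of_trivial, hPD.isHermitian]
  set M := X - P * Y with hMdef
  have hMH : Mᴴ = Xᵀ - Yᵀ * P := by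
    rw [Matrix.conjTranspose_eq_transpose_of_trivial, hMdef, Matrix.transpose_sub,
      Matrix.transpose_mul, hPt]
  have expand : Mᴴ * P⁻¹ * M
      = Xᵀ * P⁻¹ * X - Xᵀ * Y - Yᵀ * X + Yᵀ * (P * Y) := by
    rw [hMH, hMdef]
    have e1 : P⁻¹ * (P * Y) = Y := by rw [← Matrix.mul_assoc, hinv1, Matrix.one_mul]
    have e2 : P * (P⁻¹ * X) = X := by rw [← Matrix.mul_assoc, hinv2, Matrix.one_mul]
    simp only [Matrix.sub_mul, Matrix.mul_sub, Matrix.mul_assoc, e1, e2]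
    abel
  have h0 : 0 ≤ (Mᴴ * P⁻¹ * M).trace :=
    psd_trace_nonneg' (hQ.conjTranspose_mul_mul_same M)
  rw [expand] at h0
  -- rewrite the four traces
  have t1 : (Xᵀ * P⁻¹ * X).trace = (T : ℝ) * (S * S * P⁻¹).trace := by
    rw [Matrix.trace_mul_comm, ← Matrix.mul_assoc, hXX, Matrix.smul_mul, Matrix.trace_smul]
    simp [mul_comm]
  have t2 : (Xᵀ * Y).trace = (X * Yᵀ).trace := by
    rw [Matrix.trace_mul_comm, ← Matrix.trace_transpose (X * Yᵀ), Matrix.transpose_mul,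
      Matrix.transpose_transpose]
  have t3 : (Yᵀ * X).trace = (X * Yᵀ).trace := Matrix.trace_mul_comm _ _
  have t4 : (Yᵀ * (P * Y)).trace = (T : ℝ) * P.trace := by
    rw [Matrix.trace_mul_comm, Matrix.mul_assoc, hY, Matrix.mul_smul, Matrix.mul_one,
      Matrix.trace_smul]
    simp [mul_comm]
  rw [Matrix.trace_add, Matrix.trace_sub, Matrix.trace_sub, t1, t2, t3, t4] at h0
  -- key bound : (S*S*P⁻¹).trace ≤ P.trace
  have hDpsd : ((P * P - S * S) * P⁻¹).PosSemidef → True := fun _ => trivial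
  have hPP : P * P - S * S = (2 * ε) • S + (ε * ε) • (1 : Matrix (Fin N) (Fin N) ℝ) := by
    rw [hPdef]
    rw [Matrix.add_mul, Matrix.mul_add, Matrix.mul_add]
    simp only [Matrix.smul_mul, Matrix.mul_smul, Matrix.one_mul, Matrix.mul_one, smul_smul]
    module
  have hkey : (S * S * P⁻¹).trace ≤ P.trace := by
    have hD : (P * P - S * S).PosSemidef := by
      rw [hPP]
      exact (psd_smul' (by positivity) hS).add
        (psd_smul' (by positivity) Matrix.PosDef.one.posSemidef)
    have := psd_trace_mul_nonneg' hD hQ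
    rw [Matrix.sub_mul, Matrix.trace_sub, Matrix.mul_assoc, hinv2, Matrix.mul_one] at this
    linarith
  -- trace of P
  have hPtr : P.trace = S.trace + ε * N := by
    rw [hPdef, Matrix.trace_add, Matrix.trace_smul, Matrix.trace_one]
    simp [smul_eq_mul]
  have hεδ : ε * ((T : ℝ) * N + 1) = δ := div_mul_cancel₀ δ h1.ne'
  have hfin : (T : ℝ) * N * ε ≤ δ := by nlinarith
  have : (X * Yᵀ).trace ≤ (T : ℝ) * P.trace := by nlinarith
  rw [hPtr] at this
  nlinarith
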